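/- arXiv:2205.02466 — 3 statements merged into one kernel-verified Lean document; each statement's English description precedes it below -/
import Mathlib

section
/- Fix d ≥ 1, ε > 0 and let e_1 ∈ S^{d-1} be the first standard basis vector. Let f : ℝ^d → ℝ≥0 be an ε-indistinguishable probability density whose associated random variable 𝓡 satisfies E[𝓡] = e_1. Then there exists an ε-DP local randomizer R' from S^{d-1} to ℝ^d such that ∫ u dR'(v)(u) = v and ∫ ‖u − v‖² dR'(v)(u) = E[‖𝓡 − e_1‖²] for every v ∈ S^{d-1}. -/
open MeasureTheory ProbabilityTheory Real Filter
open scoped ENNReal NNReal InnerProductSpace Topology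

noncomputable section

/-- Euclidean space `ℝ^d`. -/
abbrev Euc (d : ℕ) : Type := EuclideanSpace ℝ (Fin d)

/-- The unit sphere `S^{d-1}` as a subset of `ℝ^d`. -/
def Sph (d : ℕ) : Set (Euc d) := Metric.sphere 0 1

/-- An `ε`-DP local randomizer from the unit sphere to a measurable space `Y`:
a measurable family of probability measures satisfying
`R(v)(E) ≤ e^ε · R(v')(E)` for all `v, v'` on the sphere and measurable `E`. -/
def IsDPRandomizer {Y : Type} [MeasurableSpace Y] (d : ℕ) (ε : ℝ)
    (R : Euc d → Measure Y) : Prop :=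
  (∀ v ∈ Sph d, IsProbabilityMeasure (R v)) ∧
  (∀ E : Set Y, MeasurableSet E → Measurable fun v => R v E) ∧
  ∀ v ∈ Sph d, ∀ v' ∈ Sph d, ∀ E : Set Y, MeasurableSet E →
    R v E ≤ ENNReal.ofReal (Real.exp ε) * R v' E

/-- The uniform (normalized surface) probability measure on the unit sphere of `ℝ^d`,
viewed as a measure on the ambient space. -/
def uniformSphere (d : ℕ) : Measure (Euc d) :=
  (((volume : Measure (Euc d)).toSphere Set.univ)⁻¹ •
    ((volume : Measure (Euc d)).toSphere)).map Subtype.val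

/-- The worst-case mean squared error `err_n(A, R)` of a protocol, where the `n`
reports `R(v_1), …, R(v_n)` are independent. -/
def errN {Y : Type} [MeasurableSpace Y] (d n : ℕ)
    (A : (Fin n → Y) → Euc d) (R : Euc d → Measure Y) : ℝ :=
  ⨆ v : Fin n → (Metric.sphere (0 : Euc d) 1),
    ∫ z, ‖A z - (n : ℝ)⁻¹ • ∑ i, (v i : Euc d)‖ ^ 2
      ∂(Measure.pi fun i => R (v i))

/-- Additive (averaging) aggregation `AdA`. -/
def adA (d n : ℕ) (z : Fin n → Euc d) : Euc d := (n : ℝ)⁻¹ • ∑ i, z i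

/-- The error of a canonical randomizer, `err(R) = sup_{v ∈ S^{d-1}} E‖R(v) − v‖²`. -/
def errC (d : ℕ) (R : Euc d → Measure (Euc d)) : ℝ :=
  ⨆ v : Metric.sphere (0 : Euc d) 1, ∫ u, ‖u - (v : Euc d)‖ ^ 2 ∂(R v)

/-- The incomplete Beta function `B(x; a, b) = ∫_0^x t^{a-1}(1-t)^{b-1} dt`. -/
def incBeta (x a b : ℝ) : ℝ := ∫ t in (0:ℝ)..x, t ^ (a - 1) * (1 - t) ^ (b - 1)

/-- The normalization constant `m` of `PrivUnit(p, γ)`, with `a = (d-1)/2` and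
`τ = (1+γ)/2`:  `m = ((1-γ²)^a/(2^{d-2}(d-1)))·(p/(B(a,a)−B(τ;a,a)) + (1−p)/B(τ;a,a))`. -/
def puNorm (d : ℕ) (p γ : ℝ) : ℝ :=
  ((1 - γ ^ 2) ^ (((d : ℝ) - 1) / 2) / (2 ^ ((d : ℝ) - 2) * ((d : ℝ) - 1))) *
    (p / (incBeta 1 (((d : ℝ) - 1) / 2) (((d : ℝ) - 1) / 2) -
          incBeta ((1 + γ) / 2) (((d : ℝ) - 1) / 2) (((d : ℝ) - 1) / 2)) +
     (1 - p) / incBeta ((1 + γ) / 2) (((d : ℝ) - 1) / 2) (((d : ℝ) - 1) / 2))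

/-- The spherical cap `{u : ⟨u, v⟩ ≥ γ}`. -/
def cap (d : ℕ) (γ : ℝ) (v : Euc d) : Set (Euc d) := {u | γ ≤ ⟪u, v⟫_ℝ}

/-- The mixture measure of `PrivUnit(p, γ)` before normalization: with probability `p`
draw from the uniform measure conditioned on the cap `{u : ⟨u,v⟩ ≥ γ}`, and with
probability `1 − p` from the uniform measure conditioned on its complement. -/
def privUnitRaw (d : ℕ) (p γ : ℝ) (v : Euc d) : Measure (Euc d) :=
  ENNReal.ofReal p • (uniformSphere d)[|cap d γ v] +
    ENNReal.ofReal (1 - p) • (uniformSphere d)[|(cap d γ v)ᶜ]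

/-- The `PrivUnit(p, γ)` randomizer of Bhowmick et al.: the mixture above
rescaled by `1/m`. -/
def privUnit (d : ℕ) (p γ : ℝ) (v : Euc d) : Measure (Euc d) :=
  (privUnitRaw d p γ v).map (fun u => (puNorm d p γ)⁻¹ • u)

/-- The first standard basis vector `e_1` of `ℝ^d` (zero if `d = 0`). -/
def eFirst (d : ℕ) : Euc d :=
  if h : 0 < d then EuclideanSpace.single (⟨0, h⟩ : Fin d) (1 : ℝ) else 0

/-- The reflection of `u` in coordinates aligned with `v`: it keeps the component
of `u` along `v` and negates the orthogonal component.  For `v = e_1` this is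
`u^- = (u_1, −u_2, …, −u_d)`. -/
def reflAlong (d : ℕ) (v u : Euc d) : Euc d := (2 * ⟪u, v⟫_ℝ) • v - u

/-- A density is `ε`-indistinguishable if `f(u₁) ≤ e^ε f(u₂)` whenever `‖u₁‖ = ‖u₂‖`. -/
def IsIndistDensity (d : ℕ) (ε : ℝ) (f : Euc d → ℝ≥0) : Prop :=
  ∀ u1 u2 : Euc d, ‖u1‖ = ‖u2‖ → (f u1 : ℝ) ≤ Real.exp ε * (f u2 : ℝ)

/-- The measure on `ℝ^d` with density `f` with respect to Lebesgue measure. -/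
def densMeasure (d : ℕ) (f : Euc d → ℝ≥0) : Measure (Euc d) :=
  volume.withDensity fun u => (f u : ℝ≥0∞)

/-- The uniform probability measure on the sphere of radius `C` in `ℝ^d`. -/
def uniformSphereR (d : ℕ) (C : ℝ) : Measure (Euc d) :=
  (uniformSphere d).map (fun u => C • u)

/-- The standard normal density `φ`. -/
def stdGaussPDF (x : ℝ) : ℝ := (Real.sqrt (2 * Real.pi))⁻¹ * Real.exp (-(x ^ 2) / 2)

/-- The standard normal CDF `Φ`. -/
def stdGaussCDF (x : ℝ) : ℝ := ((gaussianReal 0 1) (Set.Iic x)).toReal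

/-- The inverse standard normal CDF `Φ⁻¹`. -/
def probit : ℝ → ℝ := Function.invFun stdGaussCDF

/-- The Gaussian measure `N(0, σ² I)` on `ℝ^d` with iid `N(0, σ²)` coordinates. -/
def isoGaussian (d : ℕ) (σ2 : ℝ≥0) : Measure (Euc d) :=
  (Measure.pi fun _ : Fin d => gaussianReal 0 σ2).map
    (EuclideanSpace.equiv (Fin d) ℝ).symm

/-- The distribution of the coefficient `α` in `PrivUnitG(p, q)` in dimension `d`:
a mixture of `N(0, 1/d)` conditioned on `{≥ γ}` (weight `p`) and on `{< γ}`
(weight `1 − p`), where `γ = σ·Φ⁻¹(q)` and `σ = 1/√d`. -/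
def alphaMix (d : ℕ) (p q : ℝ) : Measure ℝ :=
  ENNReal.ofReal p •
      (gaussianReal 0 (d : ℝ≥0)⁻¹)[|Set.Ici (Real.sqrt (d : ℝ)⁻¹ * probit q)] +
    ENNReal.ofReal (1 - p) •
      (gaussianReal 0 (d : ℝ≥0)⁻¹)[|Set.Iio (Real.sqrt (d : ℝ)⁻¹ * probit q)]

/-- The normalization constant `m = σ·φ(γ/σ)·(p/(1−q) − (1−p)/q)` of `PrivUnitG(p, q)`,
with `σ = 1/√d` and `γ = σ·Φ⁻¹(q)`. -/
def mG (d : ℕ) (p q : ℝ) : ℝ :=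
  Real.sqrt (d : ℝ)⁻¹ * stdGaussPDF (probit q) * (p / (1 - q) - (1 - p) / q)

/-- The `PrivUnitG(p, q)` randomizer: on input `v`, output `(α v + V^⊥)/m` where
`α ~ alphaMix d p q` and `V^⊥ = W − ⟨W, v⟩ v` with `W ~ N(0, I/d)` independent of `α`;
`V^⊥` is Gaussian with covariance `σ²(I − v vᵀ)`. -/
def privUnitG (d : ℕ) (p q : ℝ) (v : Euc d) : Measure (Euc d) :=
  ((alphaMix d p q).prod (isoGaussian d (d : ℝ≥0)⁻¹)).map
    (fun aw => (mG d p q)⁻¹ • (aw.1 • v + (aw.2 - ⟪aw.2, v⟫_ℝ • v)))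

/-- The optimal error `err*_{ε,d}(PrivUnitG)`: the infimum of the error of
`PrivUnitG(p, q)` over `p, q ∈ (0,1)` with `(p/(1−p))·(q/(1−q)) ≤ e^ε`. -/
def errStarG (d : ℕ) (ε : ℝ) : ℝ :=
  sInf {e : ℝ | ∃ p q : ℝ, p ∈ Set.Ioo (0:ℝ) 1 ∧ q ∈ Set.Ioo (0:ℝ) 1 ∧
    p / (1 - p) * (q / (1 - q)) ≤ Real.exp ε ∧ e = errC d (privUnitG d p q)}

/-- The CDF of the first coordinate of a uniform point on `S^{d-1}`. -/
def sphereCDF (d : ℕ) (t : ℝ) : ℝ :=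
  ((uniformSphere d) {u | ⟪u, eFirst d⟫_ℝ ≤ t}).toReal

/-- `γ₂` such that `q = P(W_1 ≤ γ₂)` for `W` uniform on the sphere. -/
def gammaOf (d : ℕ) (q : ℝ) : ℝ := Function.invFun (sphereCDF d) q

/-- `PrivUnit(p, q)`: the `PrivUnit(p, γ₂)` randomizer with `γ₂` chosen so that
`q = P(W_1 ≤ γ₂)`. -/
def privUnitPQ (d : ℕ) (p q : ℝ) : Euc d → Measure (Euc d) :=
  privUnit d p (gammaOf d q)

/-- The optimal error `err*_{ε,d}(PrivUnit)`: the infimum of the error of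
`PrivUnit(p, q)` over `p, q ∈ (0,1)` with `(p/(1−p))·(q/(1−q)) ≤ e^ε`. -/
def errStarU (d : ℕ) (ε : ℝ) : ℝ :=
  sInf {e : ℝ | ∃ p q : ℝ, p ∈ Set.Ioo (0:ℝ) 1 ∧ q ∈ Set.Ioo (0:ℝ) 1 ∧
    p / (1 - p) * (q / (1 - q)) ≤ Real.exp ε ∧ e = errC d (privUnitPQ d p q)}

/-- `C_{ε,d} = (ε/d)·err*_{ε,d}(PrivUnitG)`. -/
def Ced (d : ℕ) (ε : ℝ) : ℝ := ε / (d : ℝ) * errStarG d ε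


namespace Stmt5Aux

variable {d : ℕ}

/-- Householder reflection (plain function): `u ↦ u - (2⟪u,w⟫/‖w‖²) • w`. -/
def Hf (w u : Euc d) : Euc d := u - ((2 * ⟪u, w⟫_ℝ) / ‖w‖ ^ 2) • w

lemma Hf_zero (u : Euc d) : Hf (0 : Euc d) u = u := by
  simp [Hf]

lemma inner_Hf (w u : Euc d) (hw : w ≠ 0) : ⟪Hf w u, w⟫_ℝ = -⟪u, w⟫_ℝ := by
  have hw2 : ‖w‖ ^ 2 ≠ 0 := pow_ne_zero 2 (norm_ne_zero_iff.mpr hw)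
  simp only [Hf, inner_sub_left, real_inner_smul_left, real_inner_self_eq_norm_sq]
  field_simp
  ring

lemma Hf_invol (w u : Euc d) : Hf w (Hf w u) = u := by
  rcases eq_or_ne w 0 with rfl | hw
  · simp [Hf_zero]
  · have h := inner_Hf w u hw
    conv_lhs => rw [Hf, h]
    have h2 : (2 * -⟪u, w⟫_ℝ) / ‖w‖ ^ 2 = -((2 * ⟪u, w⟫_ℝ) / ‖w‖ ^ 2) := by ring
    rw [h2, neg_smul, sub_neg_eq_add, Hf, sub_add_cancel]

lemma norm_Hf (w u : Euc d) : ‖Hf w u‖ = ‖u‖ := by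
  rcases eq_or_ne w 0 with rfl | hw
  · simp [Hf_zero]
  · have hn : ‖w‖ ≠ 0 := norm_ne_zero_iff.mpr hw
    have hsq : ‖Hf w u‖ ^ 2 = ‖u‖ ^ 2 := by
      rw [Hf, norm_sub_sq_real, real_inner_smul_right, norm_smul, Real.norm_eq_abs,
        mul_pow, sq_abs]
      field_simp
      ring
    nlinarith [norm_nonneg (Hf w u), norm_nonneg u]

lemma Hf_add (w u u' : Euc d) : Hf w (u + u') = Hf w u + Hf w u' := by
  simp only [Hf, inner_add_left]
  rw [show (2 * (⟪u, w⟫_ℝ + ⟪u', w⟫_ℝ)) / ‖w‖ ^ 2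
      = (2 * ⟪u, w⟫_ℝ) / ‖w‖ ^ 2 + (2 * ⟪u', w⟫_ℝ) / ‖w‖ ^ 2 by ring, add_smul]
  abel

lemma Hf_smul (w : Euc d) (a : ℝ) (u : Euc d) : Hf w (a • u) = a • Hf w u := by
  simp only [Hf, real_inner_smul_left, smul_sub, smul_smul]
  rw [show 2 * (a * ⟪u, w⟫_ℝ) / ‖w‖ ^ 2 = a * (2 * ⟪u, w⟫_ℝ / ‖w‖ ^ 2) by ring]

/-- The Householder reflection as a linear isometry equivalence. -/
def He (d : ℕ) (w : Euc d) : Euc d ≃ₗᵢ[ℝ] Euc d where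
  toFun := Hf w
  invFun := Hf w
  left_inv := Hf_invol w
  right_inv := Hf_invol w
  map_add' := Hf_add w
  map_smul' := Hf_smul w
  norm_map' := norm_Hf w

@[simp] lemma He_apply (w u : Euc d) : He d w u = Hf w u := rfl

end Stmt5Aux

namespace Stmt5Aux

lemma norm_eFirst (d : ℕ) (hd : 1 ≤ d) : ‖eFirst d‖ = 1 := by
  rw [eFirst, dif_pos (by omega : 0 < d), EuclideanSpace.norm_single, norm_one]

lemma Hf_eFirst (d : ℕ) (hd : 1 ≤ d) (v : Euc d) (hv : v ∈ Sph d) :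
    Hf (v - eFirst d) (eFirst d) = v := by
  set e1 := eFirst d
  have hv1 : ‖v‖ = 1 := by simpa [Sph] using hv
  have he1 : ‖e1‖ = 1 := norm_eFirst d hd
  rcases eq_or_ne v e1 with rfl | hne
  · simp [Hf_zero]
  · have hw : v - e1 ≠ 0 := sub_ne_zero.mpr hne
    have hwn : ‖v - e1‖ ^ 2 ≠ 0 := pow_ne_zero 2 (norm_ne_zero_iff.mpr hw)
    have hexp : ‖v - e1‖ ^ 2 = 2 - 2 * ⟪e1, v - e1⟫_ℝ - 2 := by
      rw [norm_sub_sq_real]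
      simp only [inner_sub_right, real_inner_self_eq_norm_sq]
      rw [real_inner_comm v e1]
      rw [hv1, he1]; ring
    have hcoef : (2 * ⟪e1, v - e1⟫_ℝ) / ‖v - e1‖ ^ 2 = -1 := by
      rw [div_eq_iff hwn]
      linarith [hexp]
    rw [Hf, hcoef, neg_smul, one_smul, sub_neg_eq_add]
    abel

lemma measurable_Hf_uncurry (d : ℕ) :
    Measurable fun p : Euc d × Euc d => Hf (p.1 - eFirst d) p.2 := by
  have h1 : Measurable fun p : Euc d × Euc d => ⟪p.2, p.1 - eFirst d⟫_ℝ := by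
    exact (continuous_inner.comp
      (continuous_snd.prodMk (continuous_fst.sub continuous_const))).measurable
  have h2 : Measurable fun p : Euc d × Euc d => ‖p.1 - eFirst d‖ ^ 2 := by
    exact ((continuous_fst.sub continuous_const).norm.pow 2).measurable
  have h3 : Measurable fun p : Euc d × Euc d =>
      ((2 * ⟪p.2, p.1 - eFirst d⟫_ℝ) / ‖p.1 - eFirst d‖ ^ 2) := by
    exact ((measurable_const.mul h1).div h2)
  exact measurable_snd.sub
    (h3.smul (continuous_fst.sub continuous_const).measurable)

lemma map_He_apply (d : ℕ) (f : Euc d → ℝ≥0) (w : Euc d) {E : Set (Euc d)}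
    (hE : MeasurableSet E) :
    ((densMeasure d f).map (He d w)) E = ∫⁻ x in E, (f (Hf w x) : ℝ≥0∞) := by
  have hmp : MeasurePreserving (He d w) (volume : Measure (Euc d)) volume :=
    (He d w).measurePreserving
  have hemb : MeasurableEmbedding (He d w) :=
    (He d w).toHomeomorph.toMeasurableEquiv.measurableEmbedding
  rw [Measure.map_apply (He d w).continuous.measurable hE, densMeasure,
    withDensity_apply _ (hE.preimage (He d w).continuous.measurable)]
  have := hmp.setLIntegral_comp_preimage_emb hemb
    (fun x => (f (Hf w x) : ℝ≥0∞)) E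
  rw [← this]
  refine setLIntegral_congr_fun (hE.preimage (He d w).continuous.measurable)
    (fun a _ => ?_)
  simp [Hf_invol]

end Stmt5Aux


/-- Extension Lemma.
Given an `ε`-indistinguishable probability density `f` on `ℝ^d` whose associated
random variable has mean `e_1`, there is an `ε`-DP local randomizer `R'` that is
unbiased and has, at every input `v ∈ S^{d-1}`, mean squared error equal to
`E‖𝓡 − e_1‖²`. -/
theorem stmt5 (d : ℕ) (hd : 1 ≤ d) (ε : ℝ) (hε : 0 < ε)
    (f : Euc d → ℝ≥0) (hind : IsIndistDensity d ε f)
    (hprob : IsProbabilityMeasure (densMeasure d f))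
    (hmean : ∫ u, u ∂(densMeasure d f) = eFirst d) :
    ∃ R' : Euc d → Measure (Euc d), IsDPRandomizer d ε R' ∧
      ∀ v ∈ Sph d, (∫ u, u ∂(R' v) = v ∧
        ∫ u, ‖u - v‖ ^ 2 ∂(R' v) = ∫ u, ‖u - eFirst d‖ ^ 2 ∂(densMeasure d f)) := by
  classical
  open Stmt5Aux in
  set μ := densMeasure d f with hμ
  refine ⟨fun v => μ.map (He d (v - eFirst d)), ⟨?_, ?_, ?_⟩, ?_⟩
  · intro v hv
    exact Measure.isProbabilityMeasure_map (He d (v - eFirst d)).continuous.measurable.aemeasurable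
  · intro E hE
    have key : ∀ v, (μ.map (He d (v - eFirst d))) E
        = μ ((fun u => Hf (v - eFirst d) u) ⁻¹' E) := fun v => by
      rw [Measure.map_apply (He d (v - eFirst d)).continuous.measurable hE]; rfl
    simp only [key]
    have hS : MeasurableSet {p : Euc d × Euc d | Hf (p.1 - eFirst d) p.2 ∈ E} :=
      (measurable_Hf_uncurry d) hE
    have := measurable_measure_prodMk_left (ν := μ) hS
    convert this using 2
    rfl
  · intro v hv v' hv' E hE
    rw [map_He_apply d f _ hE, map_He_apply d f _ hE, ← lintegral_const_mul' _ _
      (ENNReal.ofReal_ne_top)]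
    refine lintegral_mono fun x => ?_
    have hnorm : ‖Hf (v - eFirst d) x‖ = ‖Hf (v' - eFirst d) x‖ := by
      rw [norm_Hf, norm_Hf]
    have hle := hind _ _ hnorm
    calc (f (Hf (v - eFirst d) x) : ℝ≥0∞)
        = ENNReal.ofReal (f (Hf (v - eFirst d) x) : ℝ) := by
          simp [ENNReal.ofReal_coe_nnreal]
      _ ≤ ENNReal.ofReal (Real.exp ε * (f (Hf (v' - eFirst d) x) : ℝ)) :=
          ENNReal.ofReal_le_ofReal hle
      _ = ENNReal.ofReal (Real.exp ε) * (f (Hf (v' - eFirst d) x) : ℝ≥0∞) := by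
          rw [ENNReal.ofReal_mul (Real.exp_pos ε).le, ENNReal.ofReal_coe_nnreal]
  · intro v hv
    have he1 : Hf (v - eFirst d) (eFirst d) = v := Hf_eFirst d hd v hv
    dsimp only
    constructor
    · rw [integral_map (f := fun u : Euc d => u)
        (He d (v - eFirst d)).continuous.measurable.aemeasurable
        aestronglyMeasurable_id]
      have := (He d (v - eFirst d)).toLinearIsometry.integral_comp_comm
        (μ := μ) (φ := fun u => u)
      simp only [LinearIsometryEquiv.coe_toLinearIsometry] at this
      calc ∫ u, id ((He d (v - eFirst d)) u) ∂μ
          = (He d (v - eFirst d)) (∫ u, u ∂μ) := this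
        _ = v := by rw [hmean]; exact he1
    · rw [integral_map (f := fun u : Euc d => ‖u - v‖ ^ 2)
        (He d (v - eFirst d)).continuous.measurable.aemeasurable
        ((continuous_id.sub continuous_const).norm.pow 2).aestronglyMeasurable]
      refine integral_congr_ae (Filter.Eventually.of_forall fun u => ?_)
      have : (He d (v - eFirst d)) u - v
          = (He d (v - eFirst d)) (u - eFirst d) := by
        rw [map_sub]
        congr 1
        exact he1.symm
      simp only [this, LinearIsometryEquiv.norm_map]

end
end

section
/- Fix d ≥ 1, ε > 0 and let e_1 ∈ S^{d-1} be the first standard basis vector. Let f : ℝ^d → ℝ≥0 be an ε-indistinguishable probability density whose associated random variable 𝓡 satisfies E[𝓡] = e_1. Then there exists an ε-indistinguishable probability density f' : ℝ^d → ℝ≥0 with associated random variable 𝓡' such that E[𝓡'] = e_1, E[‖𝓡' − e_1‖²] ≤ E[‖𝓡 − e_1‖²], and f'(u) = f'(u^-) for all u ∈ ℝ^d, where u^- = (u_1, −u_2, …, −u_d) denotes the reflection of u = (u_1, u_2, …, u_d). -/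
open MeasureTheory ProbabilityTheory Real Filter
open scoped ENNReal NNReal InnerProductSpace Topology

noncomputable section

/-- Change of variables for `withDensity` with an arbitrary (possibly non-measurable)
density, along a measure-preserving measurable equivalence. -/
private lemma wd_comp_equiv {α : Type*} [MeasurableSpace α] (μ : Measure α)
    (e : α ≃ᵐ α) (hmp : MeasurePreserving e μ μ) (q : α → ℝ≥0∞) :
    μ.withDensity (fun u => q (e u)) = (μ.withDensity q).map e.symm := by
  refine Measure.ext fun s hs => ?_
  rw [Measure.map_apply e.symm.measurable hs, withDensity_apply _ hs,
    withDensity_apply _ (e.symm.measurable hs)]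
  have h1 : (μ.restrict (e.symm ⁻¹' s)).map e.symm = μ.restrict s := by
    rw [← Measure.restrict_map e.symm.measurable hs, (hmp.symm e).map_eq]
  calc ∫⁻ u in s, q (e u) ∂μ
      = ∫⁻ u, q (e u) ∂((μ.restrict (e.symm ⁻¹' s)).map e.symm) := by rw [h1]
    _ = ∫⁻ x, q (e (e.symm x)) ∂(μ.restrict (e.symm ⁻¹' s)) :=
        lintegral_map_equiv (fun u => q (e u)) e.symm
    _ = ∫⁻ x in e.symm ⁻¹' s, q x ∂μ := by simp only [MeasurableEquiv.apply_symm_apply]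

/-- Reflection Symmetry Lemma.
Given an `ε`-indistinguishable probability density `f` with mean `e_1`, there is
an `ε`-indistinguishable probability density `f'` with mean `e_1`, no larger
mean squared error about `e_1`, and `f'(u) = f'(u^-)` for all `u`, where
`u^- = (u_1, −u_2, …, −u_d)` is the reflection of `u` about the `e_1`-axis. -/
theorem stmt6 (d : ℕ) (hd : 1 ≤ d) (ε : ℝ) (hε : 0 < ε)
    (f : Euc d → ℝ≥0) (hind : IsIndistDensity d ε f)
    (hprob : IsProbabilityMeasure (densMeasure d f))
    (hmean : ∫ u, u ∂(densMeasure d f) = eFirst d) :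
    ∃ f' : Euc d → ℝ≥0, IsIndistDensity d ε f' ∧
      IsProbabilityMeasure (densMeasure d f') ∧
      (∫ u, u ∂(densMeasure d f') = eFirst d) ∧
      (∫ u, ‖u - eFirst d‖ ^ 2 ∂(densMeasure d f') ≤
        ∫ u, ‖u - eFirst d‖ ^ 2 ∂(densMeasure d f)) ∧
      (∀ u : Euc d, f' u = f' (reflAlong d (eFirst d) u)) := by
  classical
  haveI := hprob
  have h0d : 0 < d := hd
  set v : Euc d := eFirst d with hvdef
  have hv1 : ‖v‖ = 1 := by
    rw [hvdef, eFirst, dif_pos h0d, EuclideanSpace.norm_single, norm_one]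
  set L : Euc d ≃ₗᵢ[ℝ] Euc d := Submodule.reflection (ℝ ∙ v) with hLdef
  have hrefl : ∀ u : Euc d, reflAlong d v u = L u := by
    intro u
    rw [reflAlong, hLdef, Submodule.reflection_apply,
      Submodule.starProjection_unit_singleton (𝕜 := ℝ) hv1 u, real_inner_comm,
      two_smul, two_mul, add_smul]
  have hLL : ∀ u, L (L u) = u := fun u => Submodule.reflection_reflection _ u
  have hLv : L v = v :=
    Submodule.reflection_mem_subspace_eq_self (Submodule.mem_span_singleton_self v)
  set e : Euc d ≃ᵐ Euc d := L.toHomeomorph.toMeasurableEquiv with hedef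
  have hecoe : ∀ u, e u = L u := fun u => rfl
  have hesymmcoe : (⇑e.symm : Euc d → Euc d) = ⇑e := by
    funext u
    show L.symm u = L u
    rw [hLdef, Submodule.reflection_symm]
  have hmp : MeasurePreserving (⇑e) (volume : Measure (Euc d)) volume :=
    L.measurePreserving
  have heLL : ∀ u, e (e u) = u := fun u =>
    (hecoe _).trans ((congrArg L (hecoe u)).trans (hLL u))
  have henorm : ∀ u, ‖e u‖ = ‖u‖ := fun u => by rw [hecoe]; exact L.norm_map u
  set μ : Measure (Euc d) := densMeasure d f with hμdef
  have hμwd : μ = volume.withDensity (fun u => (f u : ℝ≥0∞)) := rfl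
  -- the constant e^ε as an extended nonneg real
  set c : ℝ≥0∞ := ENNReal.ofReal (Real.exp ε) with hcdef
  have hc0 : c ≠ 0 := by
    rw [hcdef]
    exact (ENNReal.ofReal_pos.mpr (Real.exp_pos ε)).ne'
  have hctop : c ≠ ∞ := ENNReal.ofReal_ne_top
  have hc1 : 1 ≤ c := by
    rw [hcdef, ← ENNReal.ofReal_one]
    exact ENNReal.ofReal_le_ofReal (Real.one_le_exp hε.le)
  -- the radial infimum envelope of f
  set M : Euc d → ℝ≥0∞ := fun u => ⨅ (w : Euc d) (_ : ‖w‖ = ‖u‖), (f w : ℝ≥0∞)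
    with hMdef
  have hMle : ∀ u, M u ≤ (f u : ℝ≥0∞) := by
    intro u
    simp only [hMdef]
    exact iInf_le_of_le u (iInf_le_of_le rfl le_rfl)
  have hcoever : ∀ u w : Euc d, ‖u‖ = ‖w‖ → (f u : ℝ≥0∞) ≤ c * (f w : ℝ≥0∞) := by
    intro u w huw
    have h1 : (f u : ℝ) ≤ Real.exp ε * (f w : ℝ) := hind u w huw
    calc (f u : ℝ≥0∞) = ENNReal.ofReal (f u : ℝ) := (ENNReal.ofReal_coe_nnreal).symm
      _ ≤ ENNReal.ofReal (Real.exp ε * (f w : ℝ)) := ENNReal.ofReal_le_ofReal h1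
      _ = c * (f w : ℝ≥0∞) := by
          rw [ENNReal.ofReal_mul (Real.exp_pos ε).le, ENNReal.ofReal_coe_nnreal, hcdef]
  have hfleM : ∀ u, (f u : ℝ≥0∞) ≤ c * M u := by
    intro u
    have h1 : c⁻¹ * (f u : ℝ≥0∞) ≤ M u := by
      simp only [hMdef]
      refine le_iInf₂ fun w hw => ?_
      have h2 : (f u : ℝ≥0∞) ≤ c * (f w : ℝ≥0∞) := hcoever u w hw.symm
      calc c⁻¹ * (f u : ℝ≥0∞) ≤ c⁻¹ * (c * (f w : ℝ≥0∞)) := mul_le_mul_right h2 _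
        _ = (f w : ℝ≥0∞) := by
            rw [← mul_assoc, ENNReal.inv_mul_cancel hc0 hctop, one_mul]
    calc (f u : ℝ≥0∞) = c * (c⁻¹ * (f u : ℝ≥0∞)) := by
          rw [← mul_assoc, ENNReal.mul_inv_cancel hc0 hctop, one_mul]
      _ ≤ c * M u := mul_le_mul_right h1 _
  have hMnorm : ∀ u1 u2 : Euc d, ‖u1‖ = ‖u2‖ → M u1 = M u2 := by
    intro u1 u2 h12
    rw [hMdef]
    simp only [h12]
  have hMe : ∀ u, M (e u) = M u := fun u => hMnorm _ _ (henorm u)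
  have hMfin : ∀ u, M u ≠ ∞ := fun u =>
    ((hMle u).trans_lt ENNReal.coe_lt_top).ne
  -- θ : the measure with the envelope density
  set θ : Measure (Euc d) := volume.withDensity M with hθdef
  have hθs : ∀ s : Set (Euc d), MeasurableSet s → θ s = ∫⁻ u in s, M u ∂volume :=
    fun s hs => withDensity_apply M hs
  have hθμ : ∀ s : Set (Euc d), MeasurableSet s → θ s ≤ μ s := by
    intro s hs
    rw [hθs s hs, hμwd, withDensity_apply _ hs]
    exact lintegral_mono fun u => hMle u
  have hμcθ : ∀ s : Set (Euc d), MeasurableSet s → μ s ≤ c * θ s := by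
    intro s hs
    rw [hθs s hs, hμwd, withDensity_apply _ hs, ← lintegral_const_mul' c M hctop]
    exact lintegral_mono fun u => hfleM u
  -- Radon-Nikodym derivative of μ
  have hac : μ ≪ (volume : Measure (Euc d)) := by
    rw [hμwd]; exact withDensity_absolutelyContinuous _ _
  set h : Euc d → ℝ≥0∞ := μ.rnDeriv volume with hhdef
  have hhm : Measurable h := Measure.measurable_rnDeriv μ volume
  have hwdh : volume.withDensity h = μ := Measure.withDensity_rnDeriv_eq μ volume hac
  have hhs : ∀ s : Set (Euc d), MeasurableSet s → ∫⁻ u in s, h u ∂volume = μ s := by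
    intro s hs
    rw [← withDensity_apply _ hs, hwdh]
  -- measurable minorant of M with the same integrals
  obtain ⟨g0, hg0m, hg0le, hg0int⟩ :=
    exists_measurable_le_lintegral_eq (volume : Measure (Euc d)) M
  have hθuniv : θ Set.univ ≤ 1 := by
    calc θ Set.univ ≤ μ Set.univ := hθμ _ MeasurableSet.univ
      _ = 1 := measure_univ
  have hθfin : ∀ s : Set (Euc d), θ s ≠ ∞ := fun s =>
    ((measure_mono (Set.subset_univ s)).trans hθuniv).trans_lt ENNReal.one_lt_top |>.ne
  have hg0tot : ∫⁻ u, g0 u ∂(volume : Measure (Euc d)) = θ Set.univ := by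
    rw [← hg0int, hθs _ MeasurableSet.univ, Measure.restrict_univ]
  have hg0s : ∀ s : Set (Euc d), MeasurableSet s → ∫⁻ u in s, g0 u ∂volume = θ s := by
    intro s hs
    have hle1 : ∫⁻ u in s, g0 u ∂volume ≤ θ s := by
      rw [hθs s hs]; exact lintegral_mono fun u => hg0le u
    have hle2 : ∫⁻ u in sᶜ, g0 u ∂volume ≤ θ sᶜ := by
      rw [hθs sᶜ hs.compl]; exact lintegral_mono fun u => hg0le u
    have hsum : ∫⁻ u in s, g0 u ∂volume + ∫⁻ u in sᶜ, g0 u ∂volume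
        = θ s + θ sᶜ := by
      rw [lintegral_add_compl _ hs, hg0tot, measure_add_measure_compl hs]
    refine le_antisymm hle1 ?_
    by_contra hlt
    push_neg at hlt
    have : θ s + θ sᶜ < θ s + θ sᶜ := by
      calc θ s + θ sᶜ = ∫⁻ u in s, g0 u ∂volume + ∫⁻ u in sᶜ, g0 u ∂volume := hsum.symm
        _ < θ s + θ sᶜ := by
            exact ENNReal.add_lt_add_of_lt_of_le
              (hle2.trans_lt (lt_top_iff_ne_top.mpr (hθfin sᶜ))).ne hlt hle2
    exact absurd this (lt_irrefl _)
  have hwdg0 : volume.withDensity g0 = θ :=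
    Measure.ext fun s hs => by rw [withDensity_apply _ hs, hg0s s hs]
  -- a.e. comparisons between g0 and h
  have hgh : g0 ≤ᵐ[volume] h := by
    refine ae_le_of_forall_setLIntegral_le_of_sigmaFinite hg0m fun s hs _ => ?_
    rw [hg0s s hs, hhs s hs]
    exact hθμ s hs
  have hhcg : h ≤ᵐ[volume] fun u => c * g0 u := by
    refine ae_le_of_forall_setLIntegral_le_of_sigmaFinite hhm fun s hs _ => ?_
    rw [hhs s hs, lintegral_const_mul' c g0 hctop, hg0s s hs]
    exact hμcθ s hs
  -- transfer a.e. statements along the reflection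
  have htransfer : ∀ p q : Euc d → ℝ≥0∞, Measurable p → Measurable q →
      p ≤ᵐ[volume] q → (fun u => p (e u)) ≤ᵐ[volume] fun u => q (e u) := by
    intro p q hp hq hpq
    have hS : MeasurableSet {u : Euc d | p u ≤ q u} := measurableSet_le hp hq
    have hS0 : volume {u : Euc d | p u ≤ q u}ᶜ = 0 := by
      exact ae_iff.mp hpq
    have h0 : volume (⇑e ⁻¹' {u : Euc d | p u ≤ q u}ᶜ) = 0 := by
      rw [← Measure.map_apply e.measurable hS.compl, hmp.map_eq, hS0]
    have hgoal : ∀ᵐ x ∂(volume : Measure (Euc d)), p (e x) ≤ q (e x) := by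
      rw [ae_iff]
      have hset : {x : Euc d | ¬ p (e x) ≤ q (e x)}
          = ⇑e ⁻¹' {u : Euc d | p u ≤ q u}ᶜ := by
        ext x
        simp [Set.preimage]
      rw [hset]
      exact h0
    exact hgoal
  have hghe : (fun u => g0 (e u)) ≤ᵐ[volume] fun u => h (e u) :=
    htransfer _ _ hg0m hhm hgh
  have hhcge : (fun u => h (e u)) ≤ᵐ[volume] fun u => c * g0 (e u) :=
    htransfer _ _ hhm (measurable_const.mul hg0m) hhcg
  -- symmetrized densities
  set k : Euc d → ℝ≥0∞ := fun u => 2⁻¹ * h u + 2⁻¹ * h (e u) with hkdef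
  set gs : Euc d → ℝ≥0∞ := fun u => 2⁻¹ * g0 u + 2⁻¹ * g0 (e u) with hgsdef
  have hkm : Measurable k := ((measurable_const.mul hhm).add
    (measurable_const.mul (hhm.comp e.measurable)))
  have hgsm : Measurable gs := ((measurable_const.mul hg0m).add
    (measurable_const.mul (hg0m.comp e.measurable)))
  have hgsM : ∀ u, gs u ≤ M u := by
    intro u
    have h1 : g0 (e u) ≤ M u := (hg0le (e u)).trans (le_of_eq (hMe u))
    calc gs u ≤ 2⁻¹ * M u + 2⁻¹ * M u :=
          add_le_add (mul_le_mul_right (hg0le u) _) (mul_le_mul_right h1 _)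
      _ = M u := by rw [← add_mul, ENNReal.inv_two_add_inv_two, one_mul]
  have hgse : ∀ u, gs (e u) = gs u := by
    intro u
    rw [hgsdef]
    simp only [heLL u]
    exact add_comm _ _
  have hke : ∀ u, k (e u) = k u := by
    intro u
    rw [hkdef]
    simp only [heLL u]
    exact add_comm _ _
  have hkae : ∀ᵐ u ∂(volume : Measure (Euc d)), gs u ≤ k u ∧ k u ≤ c * gs u := by
    filter_upwards [hgh, hhcg, hghe, hhcge] with u h1 h2 h3 h4
    constructor
    · exact add_le_add (mul_le_mul_right h1 _) (mul_le_mul_right h3 _)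
    · calc k u ≤ 2⁻¹ * (c * g0 u) + 2⁻¹ * (c * g0 (e u)) :=
            add_le_add (mul_le_mul_right h2 _) (mul_le_mul_right h4 _)
        _ = c * gs u := by rw [hgsdef]; ring
  -- the clamped symmetric density
  set k' : Euc d → ℝ≥0∞ := fun u => max (gs u) (min (k u) (c * gs u)) with hk'def
  have hk'm : Measurable k' :=
    hgsm.max (hkm.min (measurable_const.mul hgsm))
  have hgsk' : ∀ u, gs u ≤ k' u := fun u => le_max_left _ _
  have hk'ub : ∀ u, k' u ≤ c * gs u := by
    intro u
    refine max_le ?_ (min_le_right _ _)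
    calc gs u = 1 * gs u := (one_mul _).symm
      _ ≤ c * gs u := mul_le_mul_left hc1 _
  have hk'e : ∀ u, k' (e u) = k' u := by
    intro u
    rw [hk'def]
    simp only [hke u, hgse u]
  have hk'ae : k' =ᵐ[volume] k := by
    filter_upwards [hkae] with u ⟨h1, h2⟩
    rw [hk'def]
    simp only [min_eq_left h2, max_eq_right h1]
  -- ν : the symmetrized measure
  set ν : Measure (Euc d) := volume.withDensity k with hνdef
  have hwdk' : volume.withDensity k' = ν := withDensity_congr_ae hk'ae
  have hwdhe : volume.withDensity (fun u => h (e u)) = μ.map (⇑e) := by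
    rw [wd_comp_equiv volume e hmp h, hwdh, ← hesymmcoe]
  have hνsplit : ν = (2⁻¹ : ℝ≥0∞) • μ + (2⁻¹ : ℝ≥0∞) • μ.map (⇑e) := by
    rw [hνdef]
    have hk2 : k = (fun u => 2⁻¹ * h u) + fun u => 2⁻¹ * h (e u) := rfl
    rw [hk2, withDensity_add_left (f := fun u => 2⁻¹ * h u) (measurable_const.mul hhm)]
    have e1 : volume.withDensity (fun u => 2⁻¹ * h u)
        = (2⁻¹ : ℝ≥0∞) • volume.withDensity h := by
      rw [← withDensity_smul' 2⁻¹ h (by simp)]; rfl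
    have e2 : volume.withDensity (fun u => 2⁻¹ * h (e u))
        = (2⁻¹ : ℝ≥0∞) • volume.withDensity fun u => h (e u) := by
      rw [← withDensity_smul' 2⁻¹ _ (by simp)]; rfl
    rw [e1, e2, hwdh, hwdhe]
  -- the envelope measure is reflection invariant
  have hθmap : θ.map (⇑e) = θ := by
    have h1 := wd_comp_equiv volume e hmp M
    rw [show (fun u => M (e u)) = M from funext hMe, ← hθdef] at h1
    rw [hesymmcoe] at h1
    exact h1.symm
  have hwdg0e : volume.withDensity (fun u => g0 (e u)) = θ := by
    rw [wd_comp_equiv volume e hmp g0, hwdg0, hesymmcoe, hθmap]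
  have hwdgs : volume.withDensity gs = θ := by
    have hgs2 : gs = (fun u => 2⁻¹ * g0 u) + fun u => 2⁻¹ * g0 (e u) := rfl
    rw [hgs2, withDensity_add_left (f := fun u => 2⁻¹ * g0 u) (measurable_const.mul hg0m)]
    have e1 : volume.withDensity (fun u => 2⁻¹ * g0 u)
        = (2⁻¹ : ℝ≥0∞) • volume.withDensity g0 := by
      rw [← withDensity_smul' 2⁻¹ g0 (by simp)]; rfl
    have e2 : volume.withDensity (fun u => 2⁻¹ * g0 (e u))
        = (2⁻¹ : ℝ≥0∞) • volume.withDensity (fun u => g0 (e u)) := by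
      rw [← withDensity_smul' 2⁻¹ _ (by simp)]; rfl
    rw [e1, e2, hwdg0, hwdg0e, ← add_smul, ENNReal.inv_two_add_inv_two, one_smul]
  -- the final density F (as an ℝ≥0∞-valued function)
  set F : Euc d → ℝ≥0∞ := fun u => max (M u) (k' u) with hFdef
  have hMF : ∀ u, M u ≤ F u := fun u => le_max_left _ _
  have hFub : ∀ u, F u ≤ c * M u := by
    intro u
    refine max_le ?_ ((hk'ub u).trans (mul_le_mul_right (hgsM u) c))
    calc M u = 1 * M u := (one_mul _).symm
      _ ≤ c * M u := mul_le_mul_left hc1 _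
  have hFfin : ∀ u, F u ≠ ∞ := by
    intro u
    refine ((hFub u).trans_lt ?_).ne
    exact ENNReal.mul_lt_top (lt_top_iff_ne_top.mpr hctop) (lt_top_iff_ne_top.mpr (hMfin u))
  have hFe : ∀ u, F (e u) = F u := by
    intro u; rw [hFdef]; simp only [hMe u, hk'e u]
  -- the key measure identity : withDensity F = ν
  have hwdF : volume.withDensity F = ν := by
    refine Measure.ext fun s hs => le_antisymm ?_ ?_
    · rw [withDensity_apply _ hs, ← hwdk', withDensity_apply _ hs, MeasureTheory.lintegral]
      refine iSup₂_le fun φ hφ => ?_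
      set T : Set (Euc d) := {u | k' u < φ u} with hTdef
      have hT : MeasurableSet T := measurableSet_lt hk'm φ.measurable
      have hres : (volume.restrict s).restrict T = volume.restrict (T ∩ s) :=
        Measure.restrict_restrict hT
      have hresc : (volume.restrict s).restrict Tᶜ = volume.restrict (Tᶜ ∩ s) :=
        Measure.restrict_restrict hT.compl
      have hb1 : ∫⁻ u in T, φ u ∂(volume.restrict s)
          ≤ ∫⁻ u in T, k' u ∂(volume.restrict s) := by
        rw [hres]
        calc ∫⁻ u in T ∩ s, (φ u : ℝ≥0∞) ∂volume
            ≤ ∫⁻ u in T ∩ s, M u ∂volume := by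
              rw [← lintegral_indicator (hT.inter hs), ← lintegral_indicator (hT.inter hs)]
              refine lintegral_mono fun u => ?_
              by_cases hu : u ∈ T ∩ s
              · simp only [Set.indicator_of_mem hu]
                rcases le_max_iff.mp (hφ u) with h3 | h3
                · exact h3
                · exact absurd (hu.1.trans_le h3) (lt_irrefl _)
              · simp [Set.indicator_of_notMem hu]
          _ = θ (T ∩ s) := (hθs _ (hT.inter hs)).symm
          _ = ∫⁻ u in T ∩ s, gs u ∂volume := by
              rw [← hwdgs, withDensity_apply _ (hT.inter hs)]
          _ ≤ ∫⁻ u in T ∩ s, k' u ∂volume := lintegral_mono fun u => hgsk' u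
      have hb2 : ∫⁻ u in Tᶜ, φ u ∂(volume.restrict s)
          ≤ ∫⁻ u in Tᶜ, k' u ∂(volume.restrict s) := by
        rw [hresc, ← lintegral_indicator (hT.compl.inter hs),
          ← lintegral_indicator (hT.compl.inter hs)]
        refine lintegral_mono fun u => ?_
        by_cases hu : u ∈ Tᶜ ∩ s
        · simp only [Set.indicator_of_mem hu]
          exact not_lt.mp hu.1
        · simp [Set.indicator_of_notMem hu]
      calc φ.lintegral (volume.restrict s)
          = ∫⁻ u, φ u ∂(volume.restrict s) := (SimpleFunc.lintegral_eq_lintegral φ _).symm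
        _ = ∫⁻ u in T, φ u ∂(volume.restrict s)
            + ∫⁻ u in Tᶜ, φ u ∂(volume.restrict s) := (lintegral_add_compl _ hT).symm
        _ ≤ ∫⁻ u in T, k' u ∂(volume.restrict s)
            + ∫⁻ u in Tᶜ, k' u ∂(volume.restrict s) := add_le_add hb1 hb2
        _ = ∫⁻ u, k' u ∂(volume.restrict s) := lintegral_add_compl _ hT
    · rw [← hwdk', withDensity_apply _ hs, withDensity_apply _ hs]
      exact lintegral_mono fun u => le_max_right _ _
  -- the final density, ℝ≥0-valued
  set f' : Euc d → ℝ≥0 := fun u => (F u).toNNReal with hf'def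
  have hcoeF : ∀ u, (f' u : ℝ≥0∞) = F u := fun u => ENNReal.coe_toNNReal (hFfin u)
  have hdens' : densMeasure d f' = ν := by
    show volume.withDensity (fun u => ((f' u : ℝ≥0∞))) = ν
    rw [show (fun u => ((f' u : ℝ≥0∞))) = F from funext hcoeF]
    exact hwdF
  refine ⟨f', ?_, ?_, ?_, ?_, ?_⟩
  · -- indistinguishability
    intro u1 u2 h12
    have key : F u1 ≤ c * F u2 := by
      calc F u1 ≤ c * M u1 := hFub u1
        _ = c * M u2 := by rw [hMnorm u1 u2 h12]
        _ ≤ c * F u2 := mul_le_mul_right (hMF u2) c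
    rw [← hcoeF u1, ← hcoeF u2, hcdef, ← ENNReal.ofReal_coe_nnreal (p := f' u1),
      ← ENNReal.ofReal_coe_nnreal (p := f' u2),
      ← ENNReal.ofReal_mul (Real.exp_pos ε).le] at key
    exact (ENNReal.ofReal_le_ofReal_iff (by positivity)).mp key
  · -- probability measure
    refine ⟨?_⟩
    rw [hdens', hνsplit]
    have hmap1 : (μ.map (⇑e)) Set.univ = 1 := by
      rw [Measure.map_apply e.measurable MeasurableSet.univ, Set.preimage_univ]
      exact measure_univ
    simp only [Measure.add_apply, Measure.smul_apply, smul_eq_mul, hmap1, measure_univ,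
      mul_one]
    exact ENNReal.inv_two_add_inv_two
  · -- mean
    have hint : Integrable (fun u : Euc d => u) μ := by
      by_contra hni
      have h0 : (0 : Euc d) = v := by rw [← hmean, integral_undef hni]
      rw [← h0, norm_zero] at hv1
      exact zero_ne_one hv1
    set T : Euc d →L[ℝ] Euc d := L.toLinearIsometry.toContinuousLinearMap with hTdef
    have hTapp : ∀ x, T x = L x := fun x => rfl
    have hintL : Integrable (fun u : Euc d => e u) μ := by
      have h1 : (fun u : Euc d => e u) = fun u => T u := by
        funext u; rw [hTapp, hecoe]
      rw [h1]
      exact T.integrable_comp hint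
    have hintmap : Integrable (fun u : Euc d => u) (μ.map (⇑e)) := by
      rw [e.measurableEmbedding.integrable_map_iff]
      exact hintL
    rw [hdens', hνsplit,
      integral_add_measure (hint.smul_measure (by simp)) (hintmap.smul_measure (by simp)),
      integral_smul_measure, integral_smul_measure, integral_map_equiv]
    have hfun1 : (fun x : Euc d => e x) = fun x => T x := by
      funext x
      rw [hTapp]
      exact hecoe x
    have hLe1 : ∫ x, e x ∂μ = v := by
      rw [hfun1, T.integral_comp_comm hint, hmean, hTapp]
      exact hLv
    rw [hLe1, hmean]
    have h2 : ((2 : ℝ≥0∞)⁻¹).toReal = (2 : ℝ)⁻¹ := by simp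
    rw [h2, ← add_smul]
    norm_num
  · -- second moment
    set q : Euc d → ℝ := fun u => ‖u - v‖ ^ 2 with hqdef
    have hqe : ∀ u, q (e u) = q u := by
      intro u
      rw [hqdef]
      simp only [hecoe]
      have h1 : L u - v = L (u - v) := by rw [map_sub, hLv]
      rw [h1, L.norm_map]
    rw [hdens', hνsplit]
    by_cases hq : Integrable q μ
    · have hqmap : Integrable q (μ.map (⇑e)) := by
        rw [e.measurableEmbedding.integrable_map_iff]
        have h1 : q ∘ ⇑e = q := funext hqe
        rw [h1]; exact hq
      rw [integral_add_measure (hq.smul_measure (by simp)) (hqmap.smul_measure (by simp)),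
        integral_smul_measure, integral_smul_measure, integral_map_equiv]
      have h1 : ∫ x, q (e x) ∂μ = ∫ x, q x ∂μ := by
        congr 1; exact funext hqe
      rw [h1]
      have h2 : ((2 : ℝ≥0∞)⁻¹).toReal = (2 : ℝ)⁻¹ := by simp
      rw [h2, ← add_smul]
      norm_num
    · have h2 : ¬ Integrable q ((2⁻¹ : ℝ≥0∞) • μ + (2⁻¹ : ℝ≥0∞) • μ.map (⇑e)) := by
        intro hI
        apply hq
        have hle : μ ≤ (2 : ℝ≥0∞) • ((2⁻¹ : ℝ≥0∞) • μ + (2⁻¹ : ℝ≥0∞) • μ.map (⇑e)) := by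
          refine Measure.le_iff.mpr fun s hs => ?_
          simp only [Measure.smul_apply, Measure.add_apply, smul_eq_mul]
          calc μ s = 2 * (2⁻¹ * μ s) := by
                rw [← mul_assoc, ENNReal.mul_inv_cancel (by norm_num) (by norm_num), one_mul]
            _ ≤ 2 * (2⁻¹ * μ s + 2⁻¹ * (μ.map (⇑e)) s) := mul_le_mul_right le_self_add _
        exact (hI.smul_measure (by norm_num : (2:ℝ≥0∞) ≠ ∞)).mono_measure hle
      rw [integral_undef hq, integral_undef h2]
  · -- reflection symmetry
    intro u
    rw [hrefl u]
    show (F u).toNNReal = (F (L u)).toNNReal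
    rw [← hecoe u, hFe u]

end
end

section
/- There is a universal constant c > 0 such that the following holds for all d ≥ 2, γ ≥ 0, p ∈ [0,1] and ε_G > 0. Let U ~ N(0, 1/d) and suppose P(U ≥ γ) ≥ e^{−ε_G}. Let α be the random variable that with probability p is distributed as U conditioned on {U ≥ γ} and with probability 1−p is distributed as U conditioned on {U < γ}. Then E[α²] ≤ c·(γ² + (ε_G + log d)/d). -/
open MeasureTheory ProbabilityTheory Real Filter
open scoped ENNReal NNReal InnerProductSpace Topology

noncomputable section

namespace Stmt19Aux

open Set

/-- The unnormalized Gaussian density `exp(-x²/(2σ²))`. -/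
noncomputable def EE (σ2 x : ℝ) : ℝ := Real.exp (-(2 * σ2)⁻¹ * x ^ 2)

lemma EE_pos (σ2 x : ℝ) : 0 < EE σ2 x := Real.exp_pos _

lemma continuous_EE (σ2 : ℝ) : Continuous (EE σ2) := by
  unfold EE; fun_prop

variable {σ2 : ℝ}

lemma integrable_EE (hσ : 0 < σ2) : Integrable (EE σ2) := by
  have h := integrable_exp_neg_mul_sq (b := (2 * σ2)⁻¹) (by positivity)
  exact h.congr (Filter.Eventually.of_forall fun x => by simp [EE, neg_mul])

lemma sq_EE_le (hσ : 0 < σ2) (x : ℝ) :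
    x ^ 2 * EE σ2 x ≤ (2 * (2 * σ2)) * Real.exp (-((2 * σ2)⁻¹ / 2) * x ^ 2) := by
  set b : ℝ := (2 * σ2)⁻¹ with hb_def
  have hb : 0 < b := by positivity
  have h2 : (b / 2) * x ^ 2 ≤ Real.exp ((b / 2) * x ^ 2) := by
    have := Real.add_one_le_exp ((b / 2) * x ^ 2)
    linarith
  have h3 : x ^ 2 ≤ (2 / b) * Real.exp ((b / 2) * x ^ 2) := by
    rw [div_mul_eq_mul_div, le_div_iff₀ hb]
    nlinarith
  have hE : 0 < EE σ2 x := EE_pos σ2 x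
  have h4 : x ^ 2 * EE σ2 x ≤ ((2 / b) * Real.exp ((b / 2) * x ^ 2)) * EE σ2 x :=
    mul_le_mul_of_nonneg_right h3 hE.le
  have h5 : ((2 / b) * Real.exp ((b / 2) * x ^ 2)) * EE σ2 x
      = (2 / b) * Real.exp (-(b / 2) * x ^ 2) := by
    simp only [EE, mul_assoc, ← Real.exp_add, ← hb_def]
    ring_nf
  have h6 : (2 : ℝ) / b = 2 * (2 * σ2) := by
    rw [hb_def, div_eq_mul_inv, inv_inv]
  rw [← h6]
  exact h4.trans_eq h5

lemma integrable_sq_EE (hσ : 0 < σ2) : Integrable (fun x => x ^ 2 * EE σ2 x) := by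
  have hb : (0 : ℝ) < (2 * σ2)⁻¹ / 2 := by positivity
  have hbase : Integrable (fun x : ℝ => (2 * (2 * σ2)) * Real.exp (-((2 * σ2)⁻¹ / 2) * x ^ 2)) :=
    (integrable_exp_neg_mul_sq hb).const_mul _
  refine hbase.mono' ?_ ?_
  · exact ((continuous_pow 2).mul (continuous_EE σ2)).aestronglyMeasurable
  · filter_upwards with x
    rw [Real.norm_eq_abs, abs_of_nonneg (mul_nonneg (sq_nonneg x) (EE_pos σ2 x).le)]
    exact sq_EE_le hσ x

lemma hasDerivAt_EE (hσ : 0 < σ2) (x : ℝ) :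
    HasDerivAt (EE σ2) (EE σ2 x * (-(2 * σ2)⁻¹ * (2 * x))) x := by
  have h1 : HasDerivAt (fun y : ℝ => -(2 * σ2)⁻¹ * y ^ 2) (-(2 * σ2)⁻¹ * (2 * x)) x := by
    simpa using (hasDerivAt_pow 2 x).const_mul (-(2 * σ2)⁻¹)
  exact h1.exp

lemma hasDerivAt_f1 (hσ : 0 < σ2) (x : ℝ) :
    HasDerivAt (fun y => -(y * EE σ2 y)) ((x ^ 2 / σ2 - 1) * EE σ2 x) x := by
  have h3 := ((hasDerivAt_id' x).mul (hasDerivAt_EE hσ x)).neg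
  convert h3 using 1
  have hσ' : σ2 ≠ 0 := hσ.ne'
  · rfl
  · rfl
  · rfl
  field_simp
  ring

lemma hasDerivAt_mills (hσ : 0 < σ2) (x : ℝ) :
    HasDerivAt (fun y => σ2 * (y / (σ2 + y ^ 2)) * EE σ2 y)
      (-((x ^ 4 + 2 * σ2 * x ^ 2 - σ2 ^ 2) / ((σ2 + x ^ 2) ^ 2) * EE σ2 x)) x := by
  have hden : σ2 + x ^ 2 ≠ 0 := by positivity
  have h0 : HasDerivAt (fun y : ℝ => σ2 + y ^ 2) (2 * x) x := by
    simpa using (hasDerivAt_pow 2 x).const_add σ2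
  have h1 : HasDerivAt (fun y : ℝ => y / (σ2 + y ^ 2))
      ((1 * (σ2 + x ^ 2) - x * (2 * x)) / (σ2 + x ^ 2) ^ 2) x :=
    (hasDerivAt_id' x).div h0 hden
  have h3 := (h1.const_mul σ2).mul (hasDerivAt_EE hσ x)
  convert h3 using 1
  have hσ' : σ2 ≠ 0 := hσ.ne'
  · rfl
  · rfl
  · rfl
  field_simp
  ring

lemma tendsto_mul_EE (hσ : 0 < σ2) : Tendsto (fun x => x * EE σ2 x) atTop (𝓝 0) := by
  have hb : (0 : ℝ) < (2 * σ2)⁻¹ / 2 := by positivity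
  have hup : Tendsto (fun x : ℝ => (2 * (2 * σ2)) * Real.exp (-((2 * σ2)⁻¹ / 2) * x ^ 2))
      atTop (𝓝 0) := by
    have h1 : Tendsto (fun x : ℝ => -((2 * σ2)⁻¹ / 2) * x ^ 2) atTop atBot :=
      (tendsto_const_mul_atBot_of_neg (by linarith)).2 (tendsto_pow_atTop two_ne_zero)
    have h2 := Real.tendsto_exp_atBot.comp h1
    have h3 := h2.const_mul (2 * (2 * σ2))
    simpa using h3
  refine tendsto_of_tendsto_of_tendsto_of_le_of_le' tendsto_const_nhds hup ?_ ?_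
  · filter_upwards [eventually_ge_atTop (0 : ℝ)] with x hx
    exact mul_nonneg hx (EE_pos σ2 x).le
  · filter_upwards [eventually_ge_atTop (1 : ℝ)] with x hx
    have h1 : x * EE σ2 x ≤ x ^ 2 * EE σ2 x := by
      nlinarith [mul_nonneg (mul_nonneg (le_trans zero_le_one hx)
        (by linarith : (0:ℝ) ≤ x - 1)) (EE_pos σ2 x).le]
    exact h1.trans (sq_EE_le hσ x)

lemma tendsto_f1_atTop (hσ : 0 < σ2) : Tendsto (fun x => -(x * EE σ2 x)) atTop (𝓝 0) := by
  have h := (tendsto_mul_EE hσ).neg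
  simpa using h

lemma tendsto_f1_atBot (hσ : 0 < σ2) : Tendsto (fun x => -(x * EE σ2 x)) atBot (𝓝 0) := by
  have h := (tendsto_mul_EE hσ).comp tendsto_neg_atBot_atTop
  refine h.congr fun x => ?_
  simp only [Function.comp_apply, EE, neg_sq, neg_mul, neg_neg]

lemma tendsto_mills (hσ : 0 < σ2) :
    Tendsto (fun x => σ2 * (x / (σ2 + x ^ 2)) * EE σ2 x) atTop (𝓝 0) := by
  have h := (tendsto_mul_EE hσ).const_mul σ2
  rw [mul_zero] at h
  refine tendsto_of_tendsto_of_tendsto_of_le_of_le' tendsto_const_nhds h ?_ ?_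
  · filter_upwards [eventually_ge_atTop (0 : ℝ)] with x hx
    have h1 : 0 < σ2 + x ^ 2 := by positivity
    have := (EE_pos σ2 x).le
    positivity
  · filter_upwards [eventually_ge_atTop (1 : ℝ)] with x hx
    have h1 : (1 : ℝ) ≤ σ2 + x ^ 2 := by nlinarith
    have hE := (EE_pos σ2 x).le
    have h2 : x / (σ2 + x ^ 2) ≤ x := by
      rw [div_le_iff₀ (by positivity)]
      nlinarith
    calc σ2 * (x / (σ2 + x ^ 2)) * EE σ2 x ≤ σ2 * x * EE σ2 x := by
          exact mul_le_mul_of_nonneg_right (mul_le_mul_of_nonneg_left h2 hσ.le) hE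
      _ = σ2 * (x * EE σ2 x) := by ring

lemma integrable_deriv1 (hσ : 0 < σ2) :
    Integrable (fun x => (x ^ 2 / σ2 - 1) * EE σ2 x) := by
  have h := ((integrable_sq_EE hσ).div_const σ2).sub (integrable_EE hσ)
  exact h.congr (Filter.Eventually.of_forall fun x => by simp only [Pi.sub_apply]; ring)

lemma integral_Ioi_deriv1 (hσ : 0 < σ2) (γ : ℝ) :
    ∫ x in Ioi γ, (x ^ 2 / σ2 - 1) * EE σ2 x = γ * EE σ2 γ := by
  have h := integral_Ioi_of_hasDerivAt_of_tendsto' (a := γ)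
      (f := fun y => -(y * EE σ2 y)) (fun x _ => hasDerivAt_f1 hσ x)
      (integrable_deriv1 hσ).integrableOn (tendsto_f1_atTop hσ)
  rw [h]; ring

lemma integral_Iic_deriv1 (hσ : 0 < σ2) :
    ∫ x in Iic 0, (x ^ 2 / σ2 - 1) * EE σ2 x = 0 := by
  have h := integral_Iic_of_hasDerivAt_of_tendsto (a := (0 : ℝ))
      (f := fun y => -(y * EE σ2 y))
      (hasDerivAt_f1 hσ 0).continuousAt.continuousWithinAt
      (fun x _ => hasDerivAt_f1 hσ x)
      (integrable_deriv1 hσ).integrableOn (tendsto_f1_atBot hσ)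
  rw [h]; ring

lemma mills_bound (hσ : 0 < σ2) {γ : ℝ} (hγ : 0 ≤ γ) :
    σ2 * γ * EE σ2 γ ≤ (σ2 + γ ^ 2) * ∫ x in Ioi γ, EE σ2 x := by
  set φ : ℝ → ℝ := fun x => (x ^ 4 + 2 * σ2 * x ^ 2 - σ2 ^ 2) / ((σ2 + x ^ 2) ^ 2) * EE σ2 x
    with hφ_def
  have hφ_le : ∀ x, |φ x| ≤ EE σ2 x := by
    intro x
    have hden : (0 : ℝ) < (σ2 + x ^ 2) ^ 2 := by positivity
    have h1 : |(x ^ 4 + 2 * σ2 * x ^ 2 - σ2 ^ 2) / ((σ2 + x ^ 2) ^ 2)| ≤ 1 := by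
      rw [abs_div, abs_of_pos hden, div_le_one hden, abs_le]
      constructor <;> nlinarith [sq_nonneg x, sq_nonneg (x ^ 2)]
    calc |φ x| = |(x ^ 4 + 2 * σ2 * x ^ 2 - σ2 ^ 2) / ((σ2 + x ^ 2) ^ 2)| * EE σ2 x := by
          rw [hφ_def, abs_mul, abs_of_pos (EE_pos σ2 x)]
      _ ≤ 1 * EE σ2 x := mul_le_mul_of_nonneg_right h1 (EE_pos σ2 x).le
      _ = EE σ2 x := one_mul _
  have hφ_cont : Continuous φ := by
    refine Continuous.mul (Continuous.div (by fun_prop) (by fun_prop) fun x => by positivity)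
      (continuous_EE σ2)
  have hφ_int : Integrable φ := by
    refine (integrable_EE hσ).mono' hφ_cont.aestronglyMeasurable ?_
    filter_upwards with x
    rw [Real.norm_eq_abs]
    exact hφ_le x
  have hneg_int : Integrable (fun x => -(φ x)) := hφ_int.neg
  have hFTC := integral_Ioi_of_hasDerivAt_of_tendsto' (a := γ)
      (f := fun y => σ2 * (y / (σ2 + y ^ 2)) * EE σ2 y) (fun x _ => hasDerivAt_mills hσ x)
      hneg_int.integrableOn (tendsto_mills hσ)
  have hmγ : ∫ x in Ioi γ, φ x = σ2 * (γ / (σ2 + γ ^ 2)) * EE σ2 γ := by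
    have := hFTC
    rw [integral_neg] at this
    linarith [this]
  have hmono : ∫ x in Ioi γ, φ x ≤ ∫ x in Ioi γ, EE σ2 x := by
    refine integral_mono hφ_int.integrableOn (integrable_EE hσ).integrableOn fun x => ?_
    exact (le_abs_self _).trans (hφ_le x)
  have hden : (0 : ℝ) < σ2 + γ ^ 2 := by positivity
  have heq : σ2 * γ * EE σ2 γ = (σ2 + γ ^ 2) * (σ2 * (γ / (σ2 + γ ^ 2)) * EE σ2 γ) := by
    field_simp
    all_goals ring
  rw [heq, ← hmγ]
  exact mul_le_mul_of_nonneg_left hmono hden.le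

lemma key_Ioi (hσ : 0 < σ2) {γ : ℝ} (hγ : 0 ≤ γ) :
    ∫ x in Ioi γ, x ^ 2 * EE σ2 x ≤ (γ ^ 2 + 2 * σ2) * ∫ x in Ioi γ, EE σ2 x := by
  have hIE : IntegrableOn (EE σ2) (Ioi γ) := (integrable_EE hσ).integrableOn
  have hIX : IntegrableOn (fun x => x ^ 2 * EE σ2 x) (Ioi γ) :=
    (integrable_sq_EE hσ).integrableOn
  have h1 := integral_Ioi_deriv1 hσ γ
  have h2 : ∫ x in Ioi γ, (x ^ 2 / σ2 - 1) * EE σ2 x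
      = (∫ x in Ioi γ, x ^ 2 * EE σ2 x) / σ2 - ∫ x in Ioi γ, EE σ2 x := by
    rw [← integral_div, ← integral_sub (hIX.div_const σ2) hIE]
    exact integral_congr_ae (Filter.Eventually.of_forall fun x => by ring)
  have h3 := mills_bound hσ hγ
  have h4 : ∫ x in Ioi γ, x ^ 2 * EE σ2 x
      = σ2 * γ * EE σ2 γ + σ2 * ∫ x in Ioi γ, EE σ2 x := by
    have h5 : (∫ x in Ioi γ, x ^ 2 * EE σ2 x) / σ2
        = γ * EE σ2 γ + ∫ x in Ioi γ, EE σ2 x := by rw [← h1, h2]; ring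
    have h6 := (div_eq_iff hσ.ne').1 h5
    rw [h6]; ring
  nlinarith [h3, h4]

lemma key_Iic (hσ : 0 < σ2) :
    ∫ x in Iic (0 : ℝ), x ^ 2 * EE σ2 x = σ2 * ∫ x in Iic (0 : ℝ), EE σ2 x := by
  have hIE : IntegrableOn (EE σ2) (Iic (0 : ℝ)) := (integrable_EE hσ).integrableOn
  have hIX : IntegrableOn (fun x => x ^ 2 * EE σ2 x) (Iic (0 : ℝ)) :=
    (integrable_sq_EE hσ).integrableOn
  have h1 := integral_Iic_deriv1 hσ
  have h2 : ∫ x in Iic (0 : ℝ), (x ^ 2 / σ2 - 1) * EE σ2 x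
      = (∫ x in Iic (0 : ℝ), x ^ 2 * EE σ2 x) / σ2 - ∫ x in Iic (0 : ℝ), EE σ2 x := by
    rw [← integral_div, ← integral_sub (hIX.div_const σ2) hIE]
    exact integral_congr_ae (Filter.Eventually.of_forall fun x => by ring)
  have h5 : (∫ x in Iic (0 : ℝ), x ^ 2 * EE σ2 x) / σ2 = ∫ x in Iic (0 : ℝ), EE σ2 x := by
    rw [h1] at h2; linarith
  have h6 := (div_eq_iff hσ.ne').1 h5
  rw [h6]; ring

section Gauss

variable {v : ℝ≥0}

lemma pdf_eq (x : ℝ) :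
    gaussianPDFReal 0 v x = (Real.sqrt (2 * π * (v : ℝ)))⁻¹ * EE (v : ℝ) x := by
  rw [gaussianPDFReal, EE]
  congr 1
  rw [sub_zero]
  rw [neg_div, neg_mul, inv_mul_eq_div]

lemma gauss_setIntegral (hv : v ≠ 0) {s : Set ℝ} (hs : MeasurableSet s) (f : ℝ → ℝ) :
    ∫ x in s, f x ∂(gaussianReal 0 v) = ∫ x in s, gaussianPDFReal 0 v x * f x := by
  rw [gaussianReal_of_var_ne_zero 0 hv]
  rw [show gaussianPDF 0 v = fun x => ((Real.toNNReal (gaussianPDFReal 0 v x) : ℝ≥0) : ℝ≥0∞)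
    from rfl]
  rw [MeasureTheory.restrict_withDensity hs]
  rw [integral_withDensity_eq_integral_smul (measurable_gaussianPDFReal 0 v).real_toNNReal f]
  refine integral_congr_ae (Filter.Eventually.of_forall fun x => ?_)
  simp [NNReal.smul_def, Real.coe_toNNReal _ (gaussianPDFReal_nonneg 0 v x)]

lemma gauss_meas (hv : v ≠ 0) {s : Set ℝ} (hs : MeasurableSet s) :
    ((gaussianReal 0 v) s).toReal = ∫ x in s, gaussianPDFReal 0 v x := by
  have h := gauss_setIntegral hv hs (fun _ => (1 : ℝ))
  simp only [mul_one] at h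
  rw [← h, setIntegral_const, smul_eq_mul, mul_one]
  rfl

lemma EE_setIntegral_pos (hσv : 0 < (v : ℝ)) {s : Set ℝ} (hs : MeasurableSet s)
    (hvol : volume s ≠ 0) : 0 < ∫ x in s, EE (v : ℝ) x := by
  rw [setIntegral_pos_iff_support_of_nonneg_ae
      (Filter.Eventually.of_forall fun x => (EE_pos _ x).le)
      (integrable_EE hσv).integrableOn]
  have hsupp : Function.support (EE (v : ℝ)) = Set.univ := by
    ext x; simp [Function.mem_support, (EE_pos (v : ℝ) x).ne']
  rw [hsupp, Set.univ_inter]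
  exact hvol.bot_lt

lemma gauss_meas_pos (hv : v ≠ 0) {s : Set ℝ} (hs : MeasurableSet s)
    (hvol : volume s ≠ 0) : 0 < ((gaussianReal 0 v) s).toReal := by
  have hσv : 0 < (v : ℝ) := by positivity
  have hc0 : 0 < (Real.sqrt (2 * π * (v : ℝ)))⁻¹ := by
    have : 0 < 2 * π * (v : ℝ) := by positivity
    positivity
  rw [gauss_meas hv hs]
  calc (0 : ℝ) < (Real.sqrt (2 * π * (v : ℝ)))⁻¹ * ∫ x in s, EE (v : ℝ) x :=
        mul_pos hc0 (EE_setIntegral_pos hσv hs hvol)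
    _ = ∫ x in s, gaussianPDFReal 0 v x := by
        rw [← integral_const_mul]
        exact integral_congr_ae (Filter.Eventually.of_forall fun x => (pdf_eq x).symm)

lemma gauss_setIntegral_sq (hv : v ≠ 0) {s : Set ℝ} (hs : MeasurableSet s) :
    ∫ x in s, x ^ 2 ∂(gaussianReal 0 v)
      = (Real.sqrt (2 * π * (v : ℝ)))⁻¹ * ∫ x in s, x ^ 2 * EE (v : ℝ) x := by
  rw [gauss_setIntegral hv hs (fun x => x ^ 2), ← integral_const_mul]
  refine integral_congr_ae (Filter.Eventually.of_forall fun x => ?_)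
  show gaussianPDFReal 0 v x * x ^ 2 = (Real.sqrt (2 * π * (v : ℝ)))⁻¹ * (x ^ 2 * EE (v : ℝ) x)
  rw [pdf_eq x]; ring

lemma gauss_meas_eq (hv : v ≠ 0) {s : Set ℝ} (hs : MeasurableSet s) :
    ((gaussianReal 0 v) s).toReal
      = (Real.sqrt (2 * π * (v : ℝ)))⁻¹ * ∫ x in s, EE (v : ℝ) x := by
  rw [gauss_meas hv hs, ← integral_const_mul]
  exact integral_congr_ae (Filter.Eventually.of_forall fun x => pdf_eq x)

lemma integrable_sq_gauss (hv : v ≠ 0) : Integrable (fun x : ℝ => x ^ 2) (gaussianReal 0 v) := by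
  have hσv : 0 < (v : ℝ) := by positivity
  rw [gaussianReal_of_var_ne_zero 0 hv]
  rw [show gaussianPDF 0 v = fun x => ((Real.toNNReal (gaussianPDFReal 0 v x) : ℝ≥0) : ℝ≥0∞)
    from rfl]
  rw [integrable_withDensity_iff_integrable_smul (measurable_gaussianPDFReal 0 v).real_toNNReal]
  have h : Integrable (fun x : ℝ =>
      (Real.sqrt (2 * π * (v : ℝ)))⁻¹ * (x ^ 2 * EE (v : ℝ) x)) :=
    (integrable_sq_EE hσv).const_mul _
  refine h.congr (Filter.Eventually.of_forall fun x => ?_)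
  have hnn : 0 ≤ gaussianPDFReal 0 v x := gaussianPDFReal_nonneg 0 v x
  simp only [NNReal.smul_def, Real.coe_toNNReal _ hnn, smul_eq_mul]
  rw [pdf_eq x]; ring

lemma cond_integral_eq (s : Set ℝ) :
    ∫ x, x ^ 2 ∂((gaussianReal 0 v)[|s])
      = ((gaussianReal 0 v) s).toReal⁻¹ * ∫ x in s, x ^ 2 ∂(gaussianReal 0 v) := by
  rw [ProbabilityTheory.cond, integral_smul_measure, ENNReal.toReal_inv, smul_eq_mul]

lemma cond_Ici_bound (hv : v ≠ 0) {γ : ℝ} (hγ : 0 ≤ γ) :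
    ∫ x, x ^ 2 ∂((gaussianReal 0 v)[|Set.Ici γ]) ≤ γ ^ 2 + 2 * (v : ℝ) := by
  have hσv : 0 < (v : ℝ) := by positivity
  set σ2 : ℝ := (v : ℝ)
  set c0 : ℝ := (Real.sqrt (2 * π * σ2))⁻¹ with hc0_def
  have hc0 : 0 < c0 := by
    have : 0 < 2 * π * σ2 := by positivity
    rw [hc0_def]; positivity
  set IE : ℝ := ∫ x in Ioi γ, EE σ2 x with hIE_def
  set IX : ℝ := ∫ x in Ioi γ, x ^ 2 * EE σ2 x with hIX_def
  have hIEpos : 0 < IE := EE_setIntegral_pos hσv measurableSet_Ioi (by simp [Real.volume_Ioi])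
  have hkey : IX ≤ (γ ^ 2 + 2 * σ2) * IE := key_Ioi hσv hγ
  have hmeas : ((gaussianReal 0 v) (Set.Ici γ)).toReal = c0 * IE := by
    rw [gauss_meas_eq hv measurableSet_Ici, integral_Ici_eq_integral_Ioi]
  have hint : ∫ x in Set.Ici γ, x ^ 2 ∂(gaussianReal 0 v) = c0 * IX := by
    rw [gauss_setIntegral_sq hv measurableSet_Ici, integral_Ici_eq_integral_Ioi]
  rw [cond_integral_eq, hmeas, hint]
  have heq : (c0 * IE)⁻¹ * (c0 * IX) = IX / IE := by
    field_simp
    all_goals ring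
  rw [heq, div_le_iff₀ hIEpos]
  exact hkey

lemma cond_Iio_bound (hv : v ≠ 0) {γ : ℝ} (hγ : 0 ≤ γ) :
    ∫ x, x ^ 2 ∂((gaussianReal 0 v)[|Set.Iio γ]) ≤ γ ^ 2 + 2 * (v : ℝ) := by
  have hσv : 0 < (v : ℝ) := by positivity
  set σ2 : ℝ := (v : ℝ)
  set c0 : ℝ := (Real.sqrt (2 * π * σ2))⁻¹ with hc0_def
  have hc0 : 0 < c0 := by
    have : 0 < 2 * π * σ2 := by positivity
    rw [hc0_def]; positivity
  set J1 : ℝ := ∫ x in Iio (0 : ℝ), EE σ2 x with hJ1_def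
  set J2 : ℝ := ∫ x in Ico (0 : ℝ) γ, EE σ2 x with hJ2_def
  have hJ1pos : 0 < J1 := EE_setIntegral_pos hσv measurableSet_Iio (by simp [Real.volume_Iio])
  have hJ2nonneg : 0 ≤ J2 := setIntegral_nonneg measurableSet_Ico fun x _ => (EE_pos σ2 x).le
  have hdisj : Disjoint (Iio (0 : ℝ)) (Ico (0 : ℝ) γ) :=
    (Set.Iio_disjoint_Ici le_rfl).mono_right Set.Ico_subset_Ici_self
  have hunion : Iio (0 : ℝ) ∪ Ico (0 : ℝ) γ = Iio γ := Set.Iio_union_Ico_eq_Iio hγ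
  have hIE_split : ∫ x in Iio γ, EE σ2 x = J1 + J2 := by
    rw [← hunion, setIntegral_union hdisj measurableSet_Ico
      (integrable_EE hσv).integrableOn (integrable_EE hσv).integrableOn]
  have hIX_split : ∫ x in Iio γ, x ^ 2 * EE σ2 x
      = (∫ x in Iio (0 : ℝ), x ^ 2 * EE σ2 x) + ∫ x in Ico (0 : ℝ) γ, x ^ 2 * EE σ2 x := by
    rw [← hunion, setIntegral_union hdisj measurableSet_Ico
      (integrable_sq_EE hσv).integrableOn (integrable_sq_EE hσv).integrableOn]
  have hX1 : ∫ x in Iio (0 : ℝ), x ^ 2 * EE σ2 x = σ2 * J1 := by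
    rw [hJ1_def, ← integral_Iic_eq_integral_Iio, ← integral_Iic_eq_integral_Iio]
    exact key_Iic hσv
  have hX2 : ∫ x in Ico (0 : ℝ) γ, x ^ 2 * EE σ2 x ≤ γ ^ 2 * J2 := by
    rw [hJ2_def, ← integral_const_mul]
    refine setIntegral_mono_on (integrable_sq_EE hσv).integrableOn
      ((integrable_EE hσv).integrableOn.const_mul _) measurableSet_Ico fun x hx => ?_
    have hx2 : x ^ 2 ≤ γ ^ 2 := pow_le_pow_left₀ hx.1 hx.2.le 2
    exact mul_le_mul_of_nonneg_right hx2 (EE_pos σ2 x).le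
  have hkey : ∫ x in Iio γ, x ^ 2 * EE σ2 x ≤ (γ ^ 2 + 2 * σ2) * (J1 + J2) := by
    rw [hIX_split, hX1]
    have hγ2 : (0 : ℝ) ≤ γ ^ 2 := sq_nonneg γ
    nlinarith [hX2, hJ1pos.le, hJ2nonneg]
  have hmeas : ((gaussianReal 0 v) (Set.Iio γ)).toReal = c0 * (J1 + J2) := by
    rw [gauss_meas_eq hv measurableSet_Iio, hIE_split]
  have hint : ∫ x in Set.Iio γ, x ^ 2 ∂(gaussianReal 0 v)
      = c0 * ∫ x in Iio γ, x ^ 2 * EE σ2 x := gauss_setIntegral_sq hv measurableSet_Iio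
  have hJpos : 0 < J1 + J2 := by linarith
  rw [cond_integral_eq, hmeas, hint]
  have heq : (c0 * (J1 + J2))⁻¹ * (c0 * ∫ x in Iio γ, x ^ 2 * EE σ2 x)
      = (∫ x in Iio γ, x ^ 2 * EE σ2 x) / (J1 + J2) := by
    field_simp
    all_goals ring
  rw [heq, div_le_iff₀ hJpos]
  exact hkey

end Gauss

end Stmt19Aux

/-- Lemma: second moment of the truncated Gaussian mixture.
There is a universal constant `c > 0` such that for all `d ≥ 2`, `γ ≥ 0`,
`p ∈ [0,1]` and `ε_G > 0` with `P(U ≥ γ) ≥ e^{−ε_G}` for `U ~ N(0, 1/d)`, the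
mixture `α` of `U | {U ≥ γ}` (weight `p`) and `U | {U < γ}` (weight `1−p`)
satisfies `E[α²] ≤ c·(γ² + (ε_G + log d)/d)`. -/
theorem stmt19 :
    ∃ c : ℝ, 0 < c ∧ ∀ d : ℕ, 2 ≤ d → ∀ γ : ℝ, 0 ≤ γ →
      ∀ p ∈ Set.Icc (0:ℝ) 1, ∀ εG : ℝ, 0 < εG →
      ENNReal.ofReal (Real.exp (-εG)) ≤ (gaussianReal 0 (d : ℝ≥0)⁻¹) (Set.Ici γ) →
      (∫ a, a ^ 2 ∂(ENNReal.ofReal p • (gaussianReal 0 (d : ℝ≥0)⁻¹)[|Set.Ici γ] +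
          ENNReal.ofReal (1 - p) • (gaussianReal 0 (d : ℝ≥0)⁻¹)[|Set.Iio γ])) ≤
        c * (γ ^ 2 + (εG + Real.log d) / d) := by
  refine ⟨3, by norm_num, ?_⟩
  intro d hd γ hγ p hp εG hεG _hP
  have hd0 : 0 < d := by omega
  set v : ℝ≥0 := (d : ℝ≥0)⁻¹ with hv_def
  have hdR : (0 : ℝ) < (d : ℝ) := by exact_mod_cast hd0
  have hv : v ≠ 0 := by
    rw [hv_def]
    simp only [ne_eq, inv_eq_zero, Nat.cast_eq_zero]
    omega
  have hσ2 : (v : ℝ) = (d : ℝ)⁻¹ := by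
    rw [hv_def]
    push_cast
    ring
  set μ := gaussianReal 0 v with hμ_def
  -- positivity of conditioning events
  have hIci_pos : 0 < (μ (Set.Ici γ)).toReal :=
    Stmt19Aux.gauss_meas_pos hv measurableSet_Ici (by simp [Real.volume_Ici])
  have hIio_pos : 0 < (μ (Set.Iio γ)).toReal :=
    Stmt19Aux.gauss_meas_pos hv measurableSet_Iio (by simp [Real.volume_Iio])
  have hIci_ne : μ (Set.Ici γ) ≠ 0 := by
    intro h; rw [h] at hIci_pos; simp at hIci_pos
  have hIio_ne : μ (Set.Iio γ) ≠ 0 := by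
    intro h; rw [h] at hIio_pos; simp at hIio_pos
  -- integrability
  have hint : Integrable (fun x : ℝ => x ^ 2) μ := Stmt19Aux.integrable_sq_gauss hv
  have hint1 : Integrable (fun x : ℝ => x ^ 2)
      (ENNReal.ofReal p • μ[|Set.Ici γ]) := by
    refine Integrable.smul_measure ?_ ENNReal.ofReal_ne_top
    exact (hint.restrict).smul_measure (ENNReal.inv_ne_top.2 hIci_ne)
  have hint2 : Integrable (fun x : ℝ => x ^ 2)
      (ENNReal.ofReal (1 - p) • μ[|Set.Iio γ]) := by
    refine Integrable.smul_measure ?_ ENNReal.ofReal_ne_top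
    exact (hint.restrict).smul_measure (ENNReal.inv_ne_top.2 hIio_ne)
  rw [integral_add_measure hint1 hint2, integral_smul_measure, integral_smul_measure,
    ENNReal.toReal_ofReal hp.1, ENNReal.toReal_ofReal (by linarith [hp.2] : (0:ℝ) ≤ 1 - p),
    smul_eq_mul, smul_eq_mul]
  have hA : ∫ x, x ^ 2 ∂(μ[|Set.Ici γ]) ≤ γ ^ 2 + 2 * (v : ℝ) :=
    Stmt19Aux.cond_Ici_bound hv hγ
  have hB : ∫ x, x ^ 2 ∂(μ[|Set.Iio γ]) ≤ γ ^ 2 + 2 * (v : ℝ) :=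
    Stmt19Aux.cond_Iio_bound hv hγ
  have hstep : p * (∫ x, x ^ 2 ∂(μ[|Set.Ici γ])) + (1 - p) * (∫ x, x ^ 2 ∂(μ[|Set.Iio γ]))
      ≤ γ ^ 2 + 2 * (v : ℝ) := by
    have h1 : p * (∫ x, x ^ 2 ∂(μ[|Set.Ici γ])) ≤ p * (γ ^ 2 + 2 * (v : ℝ)) :=
      mul_le_mul_of_nonneg_left hA hp.1
    have h2 : (1 - p) * (∫ x, x ^ 2 ∂(μ[|Set.Iio γ])) ≤ (1 - p) * (γ ^ 2 + 2 * (v : ℝ)) :=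
      mul_le_mul_of_nonneg_left hB (by linarith [hp.2])
    nlinarith
  refine hstep.trans ?_
  rw [hσ2]
  -- final arithmetic: γ² + 2/d ≤ 3(γ² + (εG + log d)/d)
  have hd2 : (2 : ℝ) ≤ (d : ℝ) := by exact_mod_cast hd
  have hlog2 : (0.6931471803 : ℝ) < Real.log 2 := Real.log_two_gt_d9
  have hlog : Real.log 2 ≤ Real.log d := Real.log_le_log (by norm_num) hd2
  have hkey : 2 * ((d : ℝ))⁻¹ ≤ 3 * ((εG + Real.log d) / d) := by
    rw [div_eq_mul_inv, ← mul_assoc]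
    have h1 : (2 : ℝ) ≤ 3 * (εG + Real.log d) := by nlinarith
    exact mul_le_mul_of_nonneg_right h1 (inv_nonneg.2 hdR.le)
  nlinarith [sq_nonneg γ]

end
end
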